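/- Let X, Y, Z, W be bounded operators on a complex Hilbert space H and let T = [[X, Y],[Z, W]] act on H ⊕ H. Then ‖T‖² ≤ max{‖X‖², ‖W‖²} + max{‖X‖, ‖W‖}·max{‖Y‖, ‖Z‖} + max{‖Y‖², ‖Z‖²} + w([[O, Z*W],[Y*X, O]]). -/

import Mathlib

open scoped InnerProductSpace
open ContinuousLinearMap
set_option linter.unusedSectionVars false
noncomputable section
set_option synthInstance.maxHeartbeats 1000000
set_option maxHeartbeats 1000000

variable {H : Type*} [NormedAddCommGroup H] [InnerProductSpace ℂ H] [CompleteSpace H]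

/-- The numerical radius of a bounded operator. -/
noncomputable def numRadius (T : H →L[ℂ] H) : ℝ :=
  sSup {r : ℝ | ∃ x : H, ‖x‖ = 1 ∧ r = ‖(⟪T x, x⟫_ℂ)‖}

/-- The 2×2 block operator [[X, Y],[Z, W]] on H ⊕ H (ℓ² direct sum). -/
noncomputable def blockOp (X Y Z W : H →L[ℂ] H) :
    WithLp 2 (H × H) →L[ℂ] WithLp 2 (H × H) :=
  ((WithLp.prodContinuousLinearEquiv 2 ℂ H H).symm.toContinuousLinearMap) ∘L
    ((X ∘L ContinuousLinearMap.fst ℂ H H + Y ∘L ContinuousLinearMap.snd ℂ H H).prod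
      (Z ∘L ContinuousLinearMap.fst ℂ H H + W ∘L ContinuousLinearMap.snd ℂ H H)) ∘L
    ((WithLp.prodContinuousLinearEquiv 2 ℂ H H).toContinuousLinearMap)

lemma blockOp_fst (X Y Z W : H →L[ℂ] H) (u : WithLp 2 (H × H)) :
    (blockOp X Y Z W u).fst = X u.fst + Y u.snd := rfl

lemma blockOp_snd (X Y Z W : H →L[ℂ] H) (u : WithLp 2 (H × H)) :
    (blockOp X Y Z W u).snd = Z u.fst + W u.snd := rfl

lemma numRadius_nonneg (T : H →L[ℂ] H) : 0 ≤ numRadius T := by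
  apply Real.sSup_nonneg
  rintro r ⟨x, -, rfl⟩
  exact norm_nonneg _

lemma numRadius_bddAbove (T : H →L[ℂ] H) :
    BddAbove {r : ℝ | ∃ x : H, ‖x‖ = 1 ∧ r = ‖(⟪T x, x⟫_ℂ)‖} := by
  refine ⟨‖T‖, ?_⟩
  rintro r ⟨x, hx, rfl⟩
  calc ‖⟪T x, x⟫_ℂ‖ ≤ ‖T x‖ * ‖x‖ := norm_inner_le_norm _ _
    _ ≤ (‖T‖ * ‖x‖) * ‖x‖ := by
        gcongr; exact T.le_opNorm x
    _ = ‖T‖ := by rw [hx]; ring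

lemma inner_le_numRadius (T : H →L[ℂ] H) (u : H) :
    ‖(⟪T u, u⟫_ℂ)‖ ≤ numRadius T * ‖u‖ ^ 2 := by
  rcases eq_or_ne u 0 with rfl | hu
  · simp
  · have hn : (0:ℝ) < ‖u‖ := norm_pos_iff.mpr hu
    set v : H := (‖u‖ : ℂ)⁻¹ • u with hv
    have hvn : ‖v‖ = 1 := by
      rw [hv, norm_smul]
      simp [hn.ne']
    have hmem : ‖(⟪T v, v⟫_ℂ)‖ ∈ {r : ℝ | ∃ x : H, ‖x‖ = 1 ∧ r = ‖(⟪T x, x⟫_ℂ)‖} :=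
      ⟨v, hvn, rfl⟩
    have h1 : ‖(⟪T v, v⟫_ℂ)‖ ≤ numRadius T := le_csSup (numRadius_bddAbove T) hmem
    have h2 : ‖(⟪T v, v⟫_ℂ)‖ = (‖u‖^2)⁻¹ * ‖(⟪T u, u⟫_ℂ)‖ := by
      rw [hv]
      simp only [map_smul, inner_smul_left, inner_smul_right, norm_mul]
      simp only [RCLike.norm_conj, Complex.norm_real, Real.norm_eq_abs, abs_of_pos hn]
      field_simp
      simp only [norm_div, norm_one, Complex.norm_real, Real.norm_eq_abs, abs_of_pos hn]
      field_simp
    rw [h2] at h1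
    calc ‖(⟪T u, u⟫_ℂ)‖ = ((‖u‖^2)⁻¹ * ‖(⟪T u, u⟫_ℂ)‖) * ‖u‖^2 := by
          field_simp
      _ ≤ numRadius T * ‖u‖ ^ 2 := by
          gcongr

theorem norm_block_sq_ineq (X Y Z W : H →L[ℂ] H) :
    ‖blockOp X Y Z W‖ ^ 2 ≤
      max (‖X‖ ^ 2) (‖W‖ ^ 2) + max ‖X‖ ‖W‖ * max ‖Y‖ ‖Z‖ + max (‖Y‖ ^ 2) (‖Z‖ ^ 2) +
        numRadius (blockOp 0 (adjoint Z * W) (adjoint Y * X) 0) := by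
  set S := blockOp 0 (adjoint Z * W) (adjoint Y * X) 0 with hS
  set R : ℝ := max (‖X‖ ^ 2) (‖W‖ ^ 2) + max ‖X‖ ‖W‖ * max ‖Y‖ ‖Z‖ +
      max (‖Y‖ ^ 2) (‖Z‖ ^ 2) + numRadius S with hR
  have hmax1 : max (‖X‖ ^ 2) (‖W‖ ^ 2) = (max ‖X‖ ‖W‖) ^ 2 := by
    rcases le_total ‖X‖ ‖W‖ with h | h
    · rw [max_eq_right h, max_eq_right (pow_le_pow_left₀ (norm_nonneg X) h 2)]
    · rw [max_eq_left h, max_eq_left (pow_le_pow_left₀ (norm_nonneg W) h 2)]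
  have hmax2 : max (‖Y‖ ^ 2) (‖Z‖ ^ 2) = (max ‖Y‖ ‖Z‖) ^ 2 := by
    rcases le_total ‖Y‖ ‖Z‖ with h | h
    · rw [max_eq_right h, max_eq_right (pow_le_pow_left₀ (norm_nonneg Y) h 2)]
    · rw [max_eq_left h, max_eq_left (pow_le_pow_left₀ (norm_nonneg Z) h 2)]
  have hRnn : 0 ≤ R := by
    have := numRadius_nonneg S
    have h1 : (0:ℝ) ≤ max (‖X‖ ^ 2) (‖W‖ ^ 2) := le_max_of_le_left (sq_nonneg _)
    have h2 : (0:ℝ) ≤ max ‖X‖ ‖W‖ * max ‖Y‖ ‖Z‖ := by positivity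
    have h3 : (0:ℝ) ≤ max (‖Y‖ ^ 2) (‖Z‖ ^ 2) := le_max_of_le_left (sq_nonneg _)
    rw [hR]; linarith
  -- pointwise bound
  have key : ∀ u : WithLp 2 (H × H), ‖blockOp X Y Z W u‖ ^ 2 ≤ R * ‖u‖ ^ 2 := by
    intro u
    set a := u.fst
    set b := u.snd
    have hun : ‖u‖ ^ 2 = ‖a‖ ^ 2 + ‖b‖ ^ 2 := WithLp.prod_norm_sq_eq_of_L2 u
    have hinner : ⟪S u, u⟫_ℂ = ⟪W b, Z a⟫_ℂ + ⟪X a, Y b⟫_ℂ := by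
      have h1 : (S u).fst = (adjoint Z * W) b := by
        rw [hS, blockOp_fst]; simp; rfl
      have h2 : (S u).snd = (adjoint Y * X) a := by
        rw [hS, blockOp_snd]; simp; rfl
      rw [WithLp.prod_inner_apply]; change ⟪(S u).fst, a⟫_ℂ + ⟪(S u).snd, b⟫_ℂ = _; rw [h1, h2]
      simp only [mul_apply_eq_comp, adjoint_inner_left]
    have hT : ‖blockOp X Y Z W u‖ ^ 2 =
        ‖X a + Y b‖ ^ 2 + ‖Z a + W b‖ ^ 2 := by
      rw [WithLp.prod_norm_sq_eq_of_L2, blockOp_fst, blockOp_snd]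
    have e1 : ‖X a + Y b‖ ^ 2 = ‖X a‖ ^ 2 + 2 * RCLike.re ⟪X a, Y b⟫_ℂ + ‖Y b‖ ^ 2 :=
      norm_add_sq _ _
    have e2 : ‖Z a + W b‖ ^ 2 = ‖Z a‖ ^ 2 + 2 * RCLike.re ⟪Z a, W b⟫_ℂ + ‖W b‖ ^ 2 :=
      norm_add_sq _ _
    have hre : RCLike.re ⟪Z a, W b⟫_ℂ = RCLike.re ⟪W b, Z a⟫_ℂ := inner_re_symm _ _
    have hres : RCLike.re ⟪X a, Y b⟫_ℂ + RCLike.re ⟪Z a, W b⟫_ℂ =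
        RCLike.re (⟪S u, u⟫_ℂ) := by
      rw [hinner, map_add, hre]; ring
    have hre_le : RCLike.re (⟪S u, u⟫_ℂ) ≤ ‖(⟪S u, u⟫_ℂ)‖ := RCLike.re_le_norm _
    -- bound diagonal parts
    have hXa : ‖X a‖ ≤ max ‖X‖ ‖W‖ * ‖a‖ := by
      calc ‖X a‖ ≤ ‖X‖ * ‖a‖ := X.le_opNorm a
        _ ≤ max ‖X‖ ‖W‖ * ‖a‖ := by gcongr; exact le_max_left _ _
    have hWb : ‖W b‖ ≤ max ‖X‖ ‖W‖ * ‖b‖ := by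
      calc ‖W b‖ ≤ ‖W‖ * ‖b‖ := W.le_opNorm b
        _ ≤ max ‖X‖ ‖W‖ * ‖b‖ := by gcongr; exact le_max_right _ _
    have hYb : ‖Y b‖ ≤ max ‖Y‖ ‖Z‖ * ‖b‖ := by
      calc ‖Y b‖ ≤ ‖Y‖ * ‖b‖ := Y.le_opNorm b
        _ ≤ max ‖Y‖ ‖Z‖ * ‖b‖ := by gcongr; exact le_max_left _ _
    have hZa : ‖Z a‖ ≤ max ‖Y‖ ‖Z‖ * ‖a‖ := by
      calc ‖Z a‖ ≤ ‖Z‖ * ‖a‖ := Z.le_opNorm a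
        _ ≤ max ‖Y‖ ‖Z‖ * ‖a‖ := by gcongr; exact le_max_right _ _
    have hd1 : ‖X a‖ ^ 2 + ‖W b‖ ^ 2 ≤ (max ‖X‖ ‖W‖) ^ 2 * ‖u‖ ^ 2 := by
      rw [hun]
      have p1 : ‖X a‖ ^ 2 ≤ (max ‖X‖ ‖W‖ * ‖a‖) ^ 2 := by
        apply pow_le_pow_left₀ (norm_nonneg _) hXa
      have p2 : ‖W b‖ ^ 2 ≤ (max ‖X‖ ‖W‖ * ‖b‖) ^ 2 := by
        apply pow_le_pow_left₀ (norm_nonneg _) hWb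
      nlinarith [sq_nonneg (max ‖X‖ ‖W‖)]
    have hd2 : ‖Y b‖ ^ 2 + ‖Z a‖ ^ 2 ≤ (max ‖Y‖ ‖Z‖) ^ 2 * ‖u‖ ^ 2 := by
      rw [hun]
      have p1 : ‖Y b‖ ^ 2 ≤ (max ‖Y‖ ‖Z‖ * ‖b‖) ^ 2 :=
        pow_le_pow_left₀ (norm_nonneg _) hYb 2
      have p2 : ‖Z a‖ ^ 2 ≤ (max ‖Y‖ ‖Z‖ * ‖a‖) ^ 2 :=
        pow_le_pow_left₀ (norm_nonneg _) hZa 2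
      nlinarith [sq_nonneg (max ‖Y‖ ‖Z‖)]
    -- bound ‖s‖ by M ‖u‖²
    have hsM : ‖(⟪S u, u⟫_ℂ)‖ ≤ max ‖X‖ ‖W‖ * max ‖Y‖ ‖Z‖ * ‖u‖ ^ 2 := by
      have c1 : ‖(⟪S u, u⟫_ℂ)‖ ≤ ‖(⟪W b, Z a⟫_ℂ)‖ + ‖(⟪X a, Y b⟫_ℂ)‖ := by
        rw [hinner]; exact norm_add_le _ _
      have c2 : ‖(⟪W b, Z a⟫_ℂ)‖ ≤ (max ‖X‖ ‖W‖ * ‖b‖) * (max ‖Y‖ ‖Z‖ * ‖a‖) :=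
        le_trans (norm_inner_le_norm _ _)
          (mul_le_mul hWb hZa (norm_nonneg _) (by positivity))
      have c3 : ‖(⟪X a, Y b⟫_ℂ)‖ ≤ (max ‖X‖ ‖W‖ * ‖a‖) * (max ‖Y‖ ‖Z‖ * ‖b‖) :=
        le_trans (norm_inner_le_norm _ _)
          (mul_le_mul hXa hYb (norm_nonneg _) (by positivity))
      have habs : 2 * (‖a‖ * ‖b‖) ≤ ‖a‖ ^ 2 + ‖b‖ ^ 2 := by nlinarith [sq_nonneg (‖a‖ - ‖b‖)]
      have hMnn : (0:ℝ) ≤ max ‖X‖ ‖W‖ * max ‖Y‖ ‖Z‖ := by positivity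
      rw [hun]
      nlinarith
    have hsw : ‖(⟪S u, u⟫_ℂ)‖ ≤ numRadius S * ‖u‖ ^ 2 := inner_le_numRadius S u
    rw [hT, e1, e2, hR, hmax1, hmax2]
    have hcross : 2 * RCLike.re ⟪X a, Y b⟫_ℂ + 2 * RCLike.re ⟪Z a, W b⟫_ℂ ≤
        ‖(⟪S u, u⟫_ℂ)‖ + ‖(⟪S u, u⟫_ℂ)‖ := by
      have h := hres ▸ hre_le
      linarith [hres, hre_le]
    nlinarith
  -- conclude
  have hop : ‖blockOp X Y Z W‖ ≤ Real.sqrt R := by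
    apply opNorm_le_bound _ (Real.sqrt_nonneg R)
    intro u
    have := key u
    have h1 : ‖blockOp X Y Z W u‖ = Real.sqrt (‖blockOp X Y Z W u‖ ^ 2) := by
      rw [Real.sqrt_sq (norm_nonneg _)]
    rw [h1]
    calc Real.sqrt (‖blockOp X Y Z W u‖ ^ 2) ≤ Real.sqrt (R * ‖u‖ ^ 2) :=
        Real.sqrt_le_sqrt this
      _ = Real.sqrt R * ‖u‖ := by
          rw [Real.sqrt_mul hRnn, Real.sqrt_sq (norm_nonneg _)]
  calc ‖blockOp X Y Z W‖ ^ 2 ≤ Real.sqrt R ^ 2 :=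
      pow_le_pow_left₀ (norm_nonneg _) hop 2
    _ = R := Real.sq_sqrt hRnn
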